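/- Let K = ℚ(√m) (m > 0 squarefree) be a real quadratic field of class number one and let ε be a unit of O_K. Fix n ∈ ℕ and write ε^n − 1 = u_n·v_n, where u_n is the squarefree part and v_n is the squarefull part of ε^n − 1. Then every prime element π of O_K dividing u_n is a non-Wieferich prime with respect to the base ε, i.e., ε^(N(π)−1) ≢ 1 (mod π²). -/
import Mathlib

open NumberField Filter

variable (K : Type*) [Field K] [NumberField K]

/-- The absolute value of the norm `N_{K/ℚ}` of an algebraic integer, as a natural number. -/
noncomputable def absNormElem (x : 𝓞 K) : ℕ := (Algebra.norm ℤ x).natAbs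

private lemma sq_dvd_aux {R : Type*} [CommRing R] (t : R) (k : ℕ) :
    t ^ 2 ∣ (1 + t) ^ k - 1 - k * t := by
  induction k with
  | zero => simp
  | succ k ih =>
    obtain ⟨c, hc⟩ := ih
    exact ⟨c * (1 + t) + k, by push_cast; linear_combination (1 + t) * hc⟩

theorem nonWieferich_of_dvd_squarefree_part_real_quadratic
    (m : ℕ) (hm : 0 < m) (hmsf : Squarefree m)
    (θ : K) (hθ : θ ^ 2 = (m : K))
    (hgen : IntermediateField.adjoin ℚ {θ} = ⊤)
    (hdeg : Module.finrank ℚ K = 2)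
    (hclass : NumberField.classNumber K = 1)
    (ε : (𝓞 K)ˣ) (n : ℕ) (u v : 𝓞 K)
    (huv : (ε : 𝓞 K) ^ n - 1 = u * v)
    (hu : Squarefree u)
    (hv : ∀ π : 𝓞 K, Prime π → π ∣ v → π ^ 2 ∣ v)
    (hcop : IsCoprime u v)
    (π : 𝓞 K) (hπ : Prime π) (hπu : π ∣ u) :
    ¬ (π ^ 2 ∣ (ε : 𝓞 K) ^ (absNormElem K π - 1) - 1) := by
  intro hcon
  set N := absNormElem K π with hNdef
  have hπ0 : π ≠ 0 := hπ.ne_zero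
  have hπnu : ¬ IsUnit π := hπ.not_unit
  have hπv : ¬ π ∣ v := fun h => hπnu (hcop.isUnit_of_dvd' hπu h)
  -- π² does not divide u * v
  have hsq : ¬ π ^ 2 ∣ u * v := by
    rintro ⟨c, hc⟩
    obtain ⟨u', rfl⟩ := hπu
    have h1 : u' * v = π * c := mul_left_cancel₀ hπ0 (by linear_combination hc)
    rcases hπ.dvd_or_dvd ⟨c, h1⟩ with h | h
    · exact hπnu (hu π (mul_dvd_mul_left π h))
    · exact hπv h
  have hπu' : π ∣ u := hπu
  -- absNorm facts
  have habs : N = Ideal.absNorm (Ideal.span {π}) := (Ideal.absNorm_span_singleton π).symm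
  have hNne : N ≠ 0 := by
    rw [habs]
    simp only [ne_eq, Ideal.absNorm_eq_zero_iff, Ideal.span_singleton_eq_bot]
    exact hπ0
  have hπN : π ∣ ((N : 𝓞 K)) := by
    rw [← Ideal.mem_span_singleton, habs]
    exact_mod_cast Ideal.absNorm_mem (Ideal.span {π})
  -- residue ring
  set I := Ideal.span {π} with hI
  have hmk : ∀ q : ℕ, (Ideal.Quotient.mk I ((ε : 𝓞 K))) ^ q = 1 ↔ π ∣ (ε : 𝓞 K) ^ q - 1 := by
    intro q
    rw [← map_pow, ← map_one (Ideal.Quotient.mk I), Ideal.Quotient.eq, hI,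
      Ideal.mem_span_singleton]
  have hd1 : π ∣ (ε : 𝓞 K) ^ (N - 1) - 1 := dvd_trans (dvd_pow_self π two_ne_zero) hcon
  have hd2 : π ∣ (ε : 𝓞 K) ^ n - 1 := by
    rw [huv]; exact hπu.trans (dvd_mul_right u v)
  set d := Nat.gcd n (N - 1) with hd
  have hord : (Ideal.Quotient.mk I ((ε : 𝓞 K))) ^ d = 1 :=
    orderOf_dvd_iff_pow_eq_one.mp
      (Nat.dvd_gcd (orderOf_dvd_of_pow_eq_one ((hmk n).mpr hd2))
        (orderOf_dvd_of_pow_eq_one ((hmk (N - 1)).mpr hd1)))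
  set t := (ε : 𝓞 K) ^ d - 1 with ht
  obtain ⟨s, hst⟩ : π ∣ t := (hmk d).mp hord
  have hdvd : d ∣ N - 1 := Nat.gcd_dvd_right _ _
  set k := (N - 1) / d with hk
  have hdk : d * k = N - 1 := Nat.mul_div_cancel' hdvd
  have hpow : (ε : 𝓞 K) ^ (N - 1) = (1 + t) ^ k := by
    have h1t : 1 + t = (ε : 𝓞 K) ^ d := by rw [ht]; ring
    rw [h1t, ← pow_mul, hdk]
  have hπ2t2 : π ^ 2 ∣ t ^ 2 := pow_dvd_pow_of_dvd ⟨s, hst⟩ 2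
  have hkt : π ^ 2 ∣ (k : 𝓞 K) * t := by
    have h3 : π ^ 2 ∣ (1 + t) ^ k - 1 := by rw [← hpow]; exact hcon
    have h4 : π ^ 2 ∣ (1 + t) ^ k - 1 - (k : 𝓞 K) * t := hπ2t2.trans (sq_dvd_aux t k)
    have := dvd_sub h3 h4
    rwa [sub_sub_cancel] at this
  have hks : π ∣ (k : 𝓞 K) * s := by
    obtain ⟨c, hc⟩ := hkt
    exact ⟨c, mul_left_cancel₀ hπ0 (by linear_combination hc - (k : 𝓞 K) * hst)⟩
  rcases hπ.dvd_or_dvd hks with hkdvd | hsdvd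
  · -- π divides k, contradiction with π ∣ N
    have hkN : (k : 𝓞 K) ∣ ((N - 1 : ℕ) : 𝓞 K) := Nat.cast_dvd_cast (Nat.div_dvd_of_dvd hdvd)
    have hN1 : ((N - 1 : ℕ) : 𝓞 K) = (N : 𝓞 K) - 1 := by
      have h1N : 1 ≤ N := Nat.one_le_iff_ne_zero.mpr hNne
      push_cast [h1N]
      ring
    have hπN1 : π ∣ (N : 𝓞 K) - 1 := by rw [← hN1]; exact hkdvd.trans hkN
    have hπ1 : π ∣ 1 := by
      have := dvd_sub hπN hπN1
      rwa [sub_sub_cancel] at this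
    exact hπnu (isUnit_of_dvd_one hπ1)
  · -- π divides s, so π² divides ε^d - 1, hence π² ∣ ε^n - 1 = u*v
    have hπ2t : π ^ 2 ∣ t := by
      obtain ⟨w, hw⟩ := hsdvd
      exact ⟨w, by rw [hst, hw]; ring⟩
    have hddn : d ∣ n := Nat.gcd_dvd_left _ _
    have htn : t ∣ (ε : 𝓞 K) ^ n - 1 := by
      have h5 : (ε : 𝓞 K) ^ d - 1 ∣ ((ε : 𝓞 K) ^ d) ^ (n / d) - 1 ^ (n / d) :=
        sub_dvd_pow_sub_pow _ _ _
      rw [← pow_mul, Nat.mul_div_cancel' hddn, one_pow] at h5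
      exact h5
    refine hsq ?_
    rw [← huv]
    exact hπ2t.trans htn
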